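/- Let f be convex, L-smooth and μ-strongly convex on X, let x* be the minimizer of f over X, and suppose p ∈ X satisfies ‖p − x*‖ ≤ R for some R > 0. Run the conditional gradient method on the restricted set X' := {x ∈ X : ‖x − p‖ ≤ R}: y₀ := p, and for k ≥ 1, x_k ∈ argmin_{x∈X'} f'(y_{k−1})(x), y_k := (1−γ_k) y_{k−1} + γ_k x_k with γ_k := 2/(k+1). Then for every K ≥ 1, f(y_K) − f(x*) ≤ 8 L R²/(K+1); consequently, if K + 1 ≥ 32 L/μ, then ‖y_K − x*‖ ≤ R/√2. -/

import Mathlib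

set_option maxHeartbeats 1000000 in
/-- Conditional gradient on the restricted set `X' = {x ∈ X : ‖x − p‖ ≤ R}`,
for an `L`-smooth, `μ`-strongly convex `f` with minimizer `x*` over `X` and `‖p − x*‖ ≤ R`:
for every `K ≥ 1`, `f(y_K) − f(x*) ≤ 8 L R²/(K+1)`, and if `K + 1 ≥ 32 L/μ` then
`‖y_K − x*‖ ≤ R/√2`. -/
theorem stmt12 {E : Type*} [NormedAddCommGroup E] [NormedSpace ℝ E] [FiniteDimensional ℝ E]
    (X : Set E) (hXcp : IsCompact X) (hXcv : Convex ℝ X) (hXne : X.Nonempty)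
    (f : E → ℝ) (f' : E → E →L[ℝ] ℝ) (L μ : ℝ) (hμ : 0 < μ) (hμL : μ ≤ L)
    (hconv : ConvexOn ℝ X f)
    (hder : ∀ a ∈ X, HasFDerivAt f (f' a) a)
    (hsm : ∀ a ∈ X, ∀ b ∈ X, f b ≤ f a + f' a (b - a) + L / 2 * ‖b - a‖ ^ 2)
    (hsc : ∀ a ∈ X, ∀ b ∈ X, f a + f' a (b - a) + μ / 2 * ‖b - a‖ ^ 2 ≤ f b)
    (xstar : E) (hxstarX : xstar ∈ X) (hxstarmin : ∀ z ∈ X, f xstar ≤ f z)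
    (p : E) (hp : p ∈ X) (R : ℝ) (hR : 0 < R) (hpR : ‖p - xstar‖ ≤ R)
    (X' : Set E) (hX' : X' = {z ∈ X | ‖z - p‖ ≤ R})
    (x y : ℕ → E) (γ : ℕ → ℝ) (hγ : ∀ k : ℕ, γ k = 2 / (k + 1))
    (hy0 : y 0 = p)
    (hxk : ∀ k ≥ 1, x k ∈ X' ∧ ∀ z ∈ X', f' (y (k - 1)) (x k) ≤ f' (y (k - 1)) z)
    (hyk : ∀ k ≥ 1, y k = (1 - γ k) • y (k - 1) + γ k • x k) :
    ∀ K ≥ 1,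
      f (y K) - f xstar ≤ 8 * L * R ^ 2 / (K + 1) ∧
      ((K : ℝ) + 1 ≥ 32 * L / μ → ‖y K - xstar‖ ≤ R / Real.sqrt 2) := by
  have hL : 0 < L := hμ.trans_le hμL
  have hX'eq : X' = X ∩ Metric.closedBall p R := by
    rw [hX']; ext z; simp [Metric.mem_closedBall, dist_eq_norm, Set.mem_setOf_eq]
  have hX'cv : Convex ℝ X' := hX'eq ▸ hXcv.inter (convex_closedBall p R)
  have hX'sub : X' ⊆ X := by rw [hX']; exact fun z hz => hz.1
  have hxsX' : xstar ∈ X' := by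
    rw [hX']; exact ⟨hxstarX, by rwa [← norm_neg, neg_sub]⟩
  have hpX' : p ∈ X' := by rw [hX']; exact ⟨hp, by simp [hR.le]⟩
  have h2R : ∀ a ∈ X', ∀ b ∈ X', ‖a - b‖ ≤ 2 * R := by
    rw [hX']; rintro a ⟨-, ha⟩ b ⟨-, hb⟩
    have h : a - b = (a - p) - (b - p) := by abel
    rw [h]
    calc ‖(a - p) - (b - p)‖ ≤ ‖a - p‖ + ‖b - p‖ := norm_sub_le _ _
      _ ≤ 2 * R := by linarith
  have hyX' : ∀ k, y k ∈ X' := by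
    intro k
    induction k with
    | zero => rw [hy0]; exact hpX'
    | succ n ih =>
      have hk := hyk (n + 1) (by omega)
      have hx := (hxk (n + 1) (by omega)).1
      rw [hk]
      simp only [Nat.add_sub_cancel]
      have hg0 : 0 ≤ γ (n + 1) := by rw [hγ]; positivity
      have hg1 : γ (n + 1) ≤ 1 := by
        rw [hγ, div_le_one (by positivity)]
        push_cast
        have : (0:ℝ) ≤ (n:ℝ) := Nat.cast_nonneg n
        linarith
      exact hX'cv ih hx (by linarith) hg0 (by ring)
  -- first order optimality at xstar
  have hopt : ∀ z ∈ X, 0 ≤ f' xstar (z - xstar) := by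
    intro z hz
    by_contra hneg
    push_neg at hneg
    set c := f' xstar (z - xstar) with hc
    set d := ‖z - xstar‖ ^ 2 with hdd
    have hd0 : 0 ≤ d := sq_nonneg _
    have key : ∀ t : ℝ, 0 < t → t ≤ 1 → 0 ≤ t * c + L / 2 * t ^ 2 * d := by
      intro t ht0 ht1
      have hzt : xstar + t • (z - xstar) ∈ X := by
        have h := hXcv hxstarX hz (by linarith : (0:ℝ) ≤ 1 - t) ht0.le (by ring)
        have he : (1 - t) • xstar + t • z = xstar + t • (z - xstar) := by
          rw [smul_sub, sub_smul, one_smul]; abel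
        rwa [he] at h
      have hh := hsm xstar hxstarX _ hzt
      have hmin := hxstarmin _ hzt
      have he2 : xstar + t • (z - xstar) - xstar = t • (z - xstar) := by abel
      rw [he2] at hh
      have hmap : f' xstar (t • (z - xstar)) = t * c := by
        rw [map_smul]; rfl
      have hn : ‖t • (z - xstar)‖ ^ 2 = t ^ 2 * d := by
        rw [norm_smul, Real.norm_of_nonneg ht0.le, mul_pow]
      rw [hmap, hn] at hh
      linarith
    rcases eq_or_lt_of_le hd0 with hd | hd
    · have h1 := key 1 one_pos le_rfl
      rw [← hd] at h1
      simp at h1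
      linarith
    · set t := min 1 (-c / (L * d)) with htdef
      have htpos : 0 < t := lt_min one_pos (div_pos (neg_pos.2 hneg) (mul_pos hL hd))
      have ht1 : t ≤ 1 := min_le_left _ _
      have ht2 : t ≤ -c / (L * d) := min_le_right _ _
      have hk := key t htpos ht1
      have hmul : t * (L * d) ≤ -c := (le_div_iff₀ (mul_pos hL hd)).1 ht2
      nlinarith [mul_le_mul_of_nonneg_left hmul htpos.le, mul_pos htpos (neg_pos.2 hneg)]
  -- the main recursion
  have hrec : ∀ k : ℕ, f (y (k + 1)) - f xstar ≤
      (1 - γ (k + 1)) * (f (y k) - f xstar) + 2 * L * R ^ 2 * γ (k + 1) ^ 2 := by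
    intro k
    have hg0 : 0 ≤ γ (k + 1) := by rw [hγ]; positivity
    have hyX : y k ∈ X := hX'sub (hyX' k)
    have hy1X : y (k + 1) ∈ X := hX'sub (hyX' (k + 1))
    have hxX' : x (k + 1) ∈ X' := (hxk (k + 1) (by omega)).1
    have hxmin := (hxk (k + 1) (by omega)).2
    simp only [Nat.add_sub_cancel] at hxmin
    have hdiff : y (k + 1) - y k = γ (k + 1) • (x (k + 1) - y k) := by
      rw [hyk (k + 1) (by omega)]
      simp only [Nat.add_sub_cancel]
      rw [smul_sub, sub_smul, one_smul]; abel
    have hsmk := hsm (y k) hyX (y (k + 1)) hy1X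
    rw [hdiff] at hsmk
    have hmap : f' (y k) (γ (k + 1) • (x (k + 1) - y k)) =
        γ (k + 1) * f' (y k) (x (k + 1) - y k) := by rw [map_smul]; rfl
    have hnorm : ‖γ (k + 1) • (x (k + 1) - y k)‖ ^ 2 =
        γ (k + 1) ^ 2 * ‖x (k + 1) - y k‖ ^ 2 := by
      rw [norm_smul, Real.norm_of_nonneg hg0, mul_pow]
    rw [hmap, hnorm] at hsmk
    have hlin : f' (y k) (x (k + 1) - y k) ≤ f xstar - f (y k) := by
      have h1 := hxmin xstar hxsX'
      have h2 := hsc (y k) hyX xstar hxstarX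
      have h3 : f' (y k) (x (k + 1) - y k) = f' (y k) (x (k + 1)) - f' (y k) (y k) := by
        rw [map_sub]
      have h4 : f' (y k) (xstar - y k) = f' (y k) xstar - f' (y k) (y k) := by
        rw [map_sub]
      nlinarith [sq_nonneg ‖xstar - y k‖, hμ.le]
    have hDn : ‖x (k + 1) - y k‖ ≤ 2 * R := h2R _ hxX' _ (hyX' k)
    have hn2 : ‖x (k + 1) - y k‖ ^ 2 ≤ (2 * R) ^ 2 := by
      nlinarith [norm_nonneg (x (k + 1) - y k)]
    nlinarith [mul_le_mul_of_nonneg_left hlin hg0,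
      mul_le_mul_of_nonneg_left hn2 (mul_nonneg (by linarith : (0:ℝ) ≤ L / 2) (sq_nonneg (γ (k + 1))))]
  have hLR : 0 ≤ L * R ^ 2 := mul_nonneg hL.le (sq_nonneg R)
  -- inductive bound
  have hbound : ∀ K : ℕ, 1 ≤ K → f (y K) - f xstar ≤ 8 * L * R ^ 2 / ((K : ℝ) + 2) := by
    intro K hK
    induction K, hK using Nat.le_induction with
    | base =>
      have h := hrec 0
      have hg : γ 1 = 1 := by rw [hγ]; norm_num
      rw [hg] at h
      push_cast
      norm_num at h ⊢
      linarith
    | succ n hn ih =>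
      have h := hrec n
      have hg : γ (n + 1) = 2 / ((n : ℝ) + 2) := by rw [hγ]; push_cast; ring_nf
      rw [hg] at h
      set t := (n : ℝ) with htd
      have ht0 : (0:ℝ) ≤ t := Nat.cast_nonneg n
      have ht2 : (0:ℝ) < t + 2 := by linarith
      have ht3 : (0:ℝ) < t + 3 := by linarith
      have hg1 : (0:ℝ) ≤ 1 - 2 / (t + 2) := by
        rw [sub_nonneg, div_le_one ht2]; linarith
      have step1 : f (y (n + 1)) - f xstar ≤
          (1 - 2 / (t + 2)) * (8 * L * R ^ 2 / (t + 2)) + 2 * L * R ^ 2 * (2 / (t + 2)) ^ 2 := by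
        have := mul_le_mul_of_nonneg_left ih hg1
        nlinarith
      have step2 : (1 - 2 / (t + 2)) * (8 * L * R ^ 2 / (t + 2)) + 2 * L * R ^ 2 * (2 / (t + 2)) ^ 2
          ≤ 8 * L * R ^ 2 / (t + 3) := by
        have h1 : (1 - 2 / (t + 2)) * (8 * L * R ^ 2 / (t + 2)) + 2 * L * R ^ 2 * (2 / (t + 2)) ^ 2
            = 8 * L * R ^ 2 * (t + 1) / (t + 2) ^ 2 := by field_simp; ring
        rw [h1, div_le_div_iff₀ (by positivity) ht3]
        have h2 : (t + 1) * (t + 3) ≤ (t + 2) ^ 2 := by nlinarith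
        have h3 := mul_le_mul_of_nonneg_left h2 (by linarith : (0:ℝ) ≤ 8 * (L * R ^ 2))
        nlinarith [h3]
      have hgoal : ((n + 1 : ℕ) : ℝ) + 2 = t + 3 := by push_cast; ring
      rw [hgoal]
      linarith
  intro K hK
  have hK1 : (0:ℝ) < (K : ℝ) + 1 := by positivity
  have hK2 : (0:ℝ) < (K : ℝ) + 2 := by linarith
  have hb1 : f (y K) - f xstar ≤ 8 * L * R ^ 2 / ((K : ℝ) + 1) := by
    have h := hbound K hK
    have : 8 * L * R ^ 2 / ((K : ℝ) + 2) ≤ 8 * L * R ^ 2 / ((K : ℝ) + 1) := by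
      gcongr <;> linarith
    linarith
  refine ⟨hb1, fun hKμ => ?_⟩
  have hY : y K ∈ X := hX'sub (hyX' K)
  have hop := hopt (y K) hY
  have hsck := hsc xstar hxstarX (y K) hY
  have h32 : 8 * L * R ^ 2 / ((K : ℝ) + 1) ≤ μ * R ^ 2 / 4 := by
    rw [div_le_iff₀ hK1]
    have h1 : 32 * L / μ ≤ (K : ℝ) + 1 := hKμ
    rw [div_le_iff₀ hμ] at h1
    nlinarith [mul_le_mul_of_nonneg_left h1 (sq_nonneg R)]
  have hn2 : ‖y K - xstar‖ ^ 2 ≤ R ^ 2 / 2 := by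
    have hh : μ / 2 * ‖y K - xstar‖ ^ 2 ≤ μ / 2 * (R ^ 2 / 2) := by linarith
    exact (mul_le_mul_iff_right₀ (by positivity : (0:ℝ) < μ / 2)).1 hh
  have hs : (0:ℝ) < Real.sqrt 2 := by positivity
  have hs2 : (R / Real.sqrt 2) ^ 2 = R ^ 2 / 2 := by
    rw [div_pow, Real.sq_sqrt (by norm_num : (0:ℝ) ≤ 2)]
  nlinarith [norm_nonneg (y K - xstar), sq_nonneg (‖y K - xstar‖ - R / Real.sqrt 2),
    div_pos hR hs]
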